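/- Define B : (0,∞) → ℝ by B(x) = (x log x − x + 1)/(x − 1)² for x ≠ 1 and B(1) = 1/2. Then B is antitone (non-increasing) on (0,∞): for all 0 < x ≤ y, B(y) ≤ B(x). Moreover lim_{x→0⁺} B(x) = 1, so B(x) ≤ 1 for all x > 0, and lim_{x→1} B(x) = 1/2. -/

import Mathlib

open Real Filter

/-- The function `B(x) = (x log x − x + 1)/(x − 1)²`, extended by `B(1) = 1/2`. -/
noncomputable def Bfun (x : ℝ) : ℝ :=
  if x = 1 then 1 / 2 else (x * Real.log x - x + 1) / (x - 1) ^ 2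

namespace BfunAux

noncomputable def f (x : ℝ) : ℝ := (x * Real.log x - x + 1) / (x - 1) ^ 2

lemma Bfun_eq_f {x : ℝ} (hx : x ≠ 1) : Bfun x = f x := by simp [Bfun, f, hx]

/-- derivative of the auxiliary function `h(x) = (x - 1/x)/2 - log x`. -/
lemma h_hasDeriv {x : ℝ} (hx : 0 < x) :
    HasDerivAt (fun x : ℝ => (x - x⁻¹) / 2 - Real.log x) ((x⁻¹ - 1) ^ 2 / 2) x := by
  have h1 := ((hasDerivAt_id x).sub (hasDerivAt_inv hx.ne')).div_const 2
  have h2 := Real.hasDerivAt_log hx.ne'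
  have := h1.sub h2
  refine this.congr_deriv ?_
  have hxx : (x ^ 2)⁻¹ = x⁻¹ * x⁻¹ := by rw [sq, mul_inv]
  have hinv : x * x⁻¹ = 1 := mul_inv_cancel₀ hx.ne'
  field_simp
  ring

lemma hmono : MonotoneOn (fun x : ℝ => (x - x⁻¹) / 2 - Real.log x) (Set.Ioi 0) := by
  apply monotoneOn_of_deriv_nonneg (convex_Ioi 0)
  · intro x hx
    exact (h_hasDeriv hx).continuousAt.continuousWithinAt
  · intro x hx
    rw [interior_Ioi] at hx
    exact (h_hasDeriv hx).differentiableAt.differentiableWithinAt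
  · intro x hx
    rw [interior_Ioi] at hx
    rw [(h_hasDeriv hx).deriv]
    positivity

/-- derivative of the auxiliary function `k(x) = log x - 2(x-1)/(x+1)`. -/
lemma k_hasDeriv {x : ℝ} (hx : 0 < x) :
    HasDerivAt (fun x : ℝ => Real.log x - 2 * (x - 1) / (x + 1))
      ((x - 1) ^ 2 / (x * (x + 1) ^ 2)) x := by
  have hx1 : x + 1 ≠ 0 := by positivity
  have h1 := (((hasDerivAt_id x).sub_const 1).const_mul 2).div
    ((hasDerivAt_id x).add_const 1) hx1
  have h2 := Real.hasDerivAt_log hx.ne'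
  have := h2.sub h1
  refine this.congr_deriv ?_
  simp only [id]
  field_simp
  ring

lemma kmono : MonotoneOn (fun x : ℝ => Real.log x - 2 * (x - 1) / (x + 1)) (Set.Ioi 0) := by
  apply monotoneOn_of_deriv_nonneg (convex_Ioi 0)
  · intro x hx
    exact (k_hasDeriv hx).continuousAt.continuousWithinAt
  · intro x hx
    rw [interior_Ioi] at hx
    exact (k_hasDeriv hx).differentiableAt.differentiableWithinAt
  · intro x hx
    rw [interior_Ioi] at hx
    rw [(k_hasDeriv hx).deriv]
    exact div_nonneg (sq_nonneg _) (mul_nonneg hx.le (sq_nonneg _))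

/-- derivative of `f` away from `1`. -/
lemma f_hasDeriv {x : ℝ} (hx : 0 < x) (hx1 : x ≠ 1) :
    HasDerivAt f ((x - 1) * (2 * (x - 1) - (x + 1) * Real.log x) / ((x - 1) ^ 2) ^ 2) x := by
  have hden : (x - 1) ^ 2 ≠ 0 := pow_ne_zero 2 (sub_ne_zero.mpr hx1)
  have hnum : HasDerivAt (fun x : ℝ => x * Real.log x - x + 1) (Real.log x + 1 - 1) x :=
    ((Real.hasDerivAt_mul_log hx.ne').sub (hasDerivAt_id x)).add_const 1
  have hD : HasDerivAt (fun x : ℝ => (x - 1) ^ 2) ((2 : ℕ) * (x - 1) ^ 1 * 1) x :=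
    ((hasDerivAt_id x).sub_const 1).pow 2
  have := hnum.div hD hden
  refine this.congr_deriv ?_
  push_cast
  ring

lemma k_one : Real.log 1 - 2 * ((1 : ℝ) - 1) / (1 + 1) = 0 := by simp

lemma f_deriv_nonpos_Ioo {x : ℝ} (hx : x ∈ Set.Ioo (0 : ℝ) 1) : deriv f x ≤ 0 := by
  obtain ⟨hx0, hx1⟩ := hx
  rw [(f_hasDeriv hx0 hx1.ne).deriv]
  apply div_nonpos_iff.mpr
  right
  constructor
  · -- (x-1) * (2(x-1) - (x+1) log x) ≤ 0 since x-1 < 0 and the second factor ≥ 0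
    have hk0 := kmono (Set.mem_Ioi.mpr hx0) (Set.mem_Ioi.mpr one_pos) hx1.le
    have hk : Real.log x - 2 * (x - 1) / (x + 1) ≤ 0 := by simpa using hk0
    have hxp : (0 : ℝ) < x + 1 := by linarith
    have h2 : (x + 1) * Real.log x ≤ 2 * (x - 1) := by
      have h3 := (le_div_iff₀ hxp).mp (by linarith : Real.log x ≤ 2 * (x - 1) / (x + 1))
      nlinarith [h3]
    have hfac : 0 ≤ 2 * (x - 1) - (x + 1) * Real.log x := by linarith
    have hneg : x - 1 ≤ 0 := by linarith
    exact mul_nonpos_of_nonpos_of_nonneg hneg hfac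
  · positivity

lemma f_deriv_nonpos_Ioi {x : ℝ} (hx : x ∈ Set.Ioi (1 : ℝ)) : deriv f x ≤ 0 := by
  have hx1 : (1 : ℝ) < x := hx
  have hx0 : (0 : ℝ) < x := lt_trans one_pos hx1
  rw [(f_hasDeriv hx0 hx1.ne').deriv]
  apply div_nonpos_iff.mpr
  right
  constructor
  · have hk0 := kmono (Set.mem_Ioi.mpr one_pos) (Set.mem_Ioi.mpr hx0) hx1.le
    have hk : 0 ≤ Real.log x - 2 * (x - 1) / (x + 1) := by simpa using hk0
    -- hk : 0 ≤ log x - 2(x-1)/(x+1)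
    have hxp : (0 : ℝ) < x + 1 := by linarith
    have h2 : 2 * (x - 1) ≤ (x + 1) * Real.log x := by
      have h3 := (div_le_iff₀ hxp).mp (by linarith : 2 * (x - 1) / (x + 1) ≤ Real.log x)
      nlinarith [h3]
    have hfac : 2 * (x - 1) - (x + 1) * Real.log x ≤ 0 := by linarith
    exact mul_nonpos_of_nonneg_of_nonpos (by linarith) hfac
  · positivity

lemma f_anti_Ioo : AntitoneOn f (Set.Ioo (0 : ℝ) 1) := by
  apply antitoneOn_of_deriv_nonpos (convex_Ioo 0 1)
  · intro x hx
    exact (f_hasDeriv hx.1 hx.2.ne).continuousAt.continuousWithinAt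
  · intro x hx
    rw [interior_Ioo] at hx
    exact (f_hasDeriv hx.1 hx.2.ne).differentiableAt.differentiableWithinAt
  · intro x hx
    rw [interior_Ioo] at hx
    exact f_deriv_nonpos_Ioo hx

lemma f_anti_Ioi : AntitoneOn f (Set.Ioi (1 : ℝ)) := by
  apply antitoneOn_of_deriv_nonpos (convex_Ioi 1)
  · intro x hx
    have hx1 : (1 : ℝ) < x := hx
    exact (f_hasDeriv (lt_trans one_pos hx1) hx1.ne').continuousAt.continuousWithinAt
  · intro x hx
    rw [interior_Ioi] at hx
    have hx1 : (1 : ℝ) < x := hx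
    exact (f_hasDeriv (lt_trans one_pos hx1) hx1.ne').differentiableAt.differentiableWithinAt
  · intro x hx
    rw [interior_Ioi] at hx
    exact f_deriv_nonpos_Ioi hx

lemma h_one : ((1 : ℝ) - (1 : ℝ)⁻¹) / 2 - Real.log 1 = 0 := by simp

lemma half_le_Bfun {x : ℝ} (hx0 : 0 < x) (hx1 : x < 1) : 1 / 2 ≤ Bfun x := by
  rw [Bfun_eq_f hx1.ne, f]
  rw [le_div_iff₀ (pow_two_pos_of_ne_zero (sub_ne_zero.mpr hx1.ne))]
  have hh0 := hmono (Set.mem_Ioi.mpr hx0) (Set.mem_Ioi.mpr one_pos) hx1.le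
  have hh : (x - x⁻¹) / 2 - Real.log x ≤ 0 := by simpa using hh0
  have hmul := mul_le_mul_of_nonneg_left (by linarith [hh] : (x - x⁻¹) / 2 ≤ Real.log x) hx0.le
  have hinv : x * x⁻¹ = 1 := mul_inv_cancel₀ hx0.ne'
  nlinarith [hmul, hinv]

lemma Bfun_le_half {x : ℝ} (hx1 : 1 < x) : Bfun x ≤ 1 / 2 := by
  have hx0 : (0 : ℝ) < x := lt_trans one_pos hx1
  rw [Bfun_eq_f hx1.ne', f]
  rw [div_le_iff₀ (pow_two_pos_of_ne_zero (sub_ne_zero.mpr hx1.ne'))]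
  have hh0 := hmono (Set.mem_Ioi.mpr one_pos) (Set.mem_Ioi.mpr hx0) hx1.le
  have hh : 0 ≤ (x - x⁻¹) / 2 - Real.log x := by simpa using hh0
  have hmul := mul_le_mul_of_nonneg_left (by linarith [hh] : Real.log x ≤ (x - x⁻¹) / 2) hx0.le
  have hinv : x * x⁻¹ = 1 := mul_inv_cancel₀ hx0.ne'
  nlinarith [hmul, hinv]

lemma Bfun_anti : AntitoneOn Bfun (Set.Ioi (0 : ℝ)) := by
  intro x hx y hy hxy
  rw [Set.mem_Ioi] at hx hy
  rcases lt_trichotomy y 1 with hy1 | hy1 | hy1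
  · have hx1 : x < 1 := lt_of_le_of_lt hxy hy1
    rw [Bfun_eq_f hx1.ne, Bfun_eq_f hy1.ne]
    exact f_anti_Ioo ⟨hx, hx1⟩ ⟨hy, hy1⟩ hxy
  · subst hy1
    rcases eq_or_lt_of_le hxy with rfl | hx1
    · exact le_refl _
    · have : Bfun 1 = 1 / 2 := by simp [Bfun]
      rw [this]
      exact half_le_Bfun hx hx1
  · rcases lt_trichotomy x 1 with hx1 | hx1 | hx1
    · exact le_trans (Bfun_le_half hy1) (half_le_Bfun hx hx1)
    · subst hx1
      have : Bfun 1 = 1 / 2 := by simp [Bfun]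
      rw [this]
      exact Bfun_le_half hy1
    · rw [Bfun_eq_f hx1.ne', Bfun_eq_f hy1.ne']
      exact f_anti_Ioi hx1 hy1 hxy

lemma Bfun_le_one {x : ℝ} (hx : 0 < x) : Bfun x ≤ 1 := by
  rcases eq_or_ne x 1 with rfl | hx1
  · simp [Bfun]; norm_num
  · rw [Bfun_eq_f hx1, f]
    rw [div_le_one (pow_two_pos_of_ne_zero (sub_ne_zero.mpr hx1))]
    have hlog := Real.log_le_sub_one_of_pos hx
    nlinarith [mul_le_mul_of_nonneg_left hlog hx.le]

lemma Bfun_tendsto_zero : Tendsto Bfun (nhdsWithin 0 (Set.Ioi (0 : ℝ))) (nhds 1) := by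
  have hcont : ContinuousAt f 0 := by
    apply ContinuousAt.div
    · exact ((Real.continuous_mul_log.sub continuous_id).add continuous_const).continuousAt
    · fun_prop
    · norm_num
  have hf0 : f 0 = 1 := by simp [f, Real.log_zero]
  have h1 : Tendsto f (nhdsWithin 0 (Set.Ioi (0 : ℝ))) (nhds 1) := by
    rw [← hf0]
    exact hcont.continuousWithinAt.tendsto
  apply h1.congr'
  filter_upwards [Ioo_mem_nhdsGT_of_mem (by norm_num : (0:ℝ) ∈ Set.Ico (0:ℝ) 1)] with x hx
  exact (Bfun_eq_f hx.2.ne).symm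

lemma Bfun_tendsto_one : Tendsto Bfun (nhdsWithin 1 {(1 : ℝ)}ᶜ) (nhds (1 / 2)) := by
  have key : Tendsto (fun x => (x * Real.log x - x + 1) / (x - 1) ^ 2)
      (nhdsWithin 1 {(1 : ℝ)}ᶜ) (nhds (1 / 2)) := by
    apply HasDerivAt.lhopital_zero_nhdsNE (f' := fun x => Real.log x)
      (g' := fun x => 2 * (x - 1))
    · -- hff'
      apply eventually_nhdsWithin_of_eventually_nhds
      filter_upwards [eventually_gt_nhds (by norm_num : (0:ℝ) < 1)] with x hx
      have : HasDerivAt (fun x : ℝ => x * Real.log x - x + 1) (Real.log x + 1 - 1) x :=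
        ((Real.hasDerivAt_mul_log hx.ne').sub (hasDerivAt_id x)).add_const 1
      simpa using this
    · -- hgg'
      apply Eventually.of_forall
      intro x
      have : HasDerivAt (fun x : ℝ => (x - 1) ^ 2) ((2 : ℕ) * (x - 1) ^ 1 * 1) x :=
        ((hasDerivAt_id x).sub_const 1).pow 2
      simpa using this
    · -- g' ≠ 0
      filter_upwards [self_mem_nhdsWithin] with x hx
      simp only [Set.mem_compl_iff, Set.mem_singleton_iff] at hx
      intro h
      apply hx
      have : x - 1 = 0 := by linarith [mul_eq_zero.mp h |>.resolve_left (by norm_num)]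
      linarith
    · -- f → 0
      have : ContinuousAt (fun x : ℝ => x * Real.log x - x + 1) 1 :=
        ((Real.continuous_mul_log.sub continuous_id).add continuous_const).continuousAt
      have h0 : (fun x : ℝ => x * Real.log x - x + 1) 1 = 0 := by simp
      rw [← h0]
      exact this.continuousWithinAt.tendsto
    · -- g → 0
      have : ContinuousAt (fun x : ℝ => (x - 1) ^ 2) 1 := by fun_prop
      have h0 : (fun x : ℝ => (x - 1) ^ 2) 1 = 0 := by norm_num
      rw [← h0]
      exact this.continuousWithinAt.tendsto
    · -- f'/g' → 1/2, second L'Hôpital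
      apply HasDerivAt.lhopital_zero_nhdsNE (f' := fun x => x⁻¹) (g' := fun _ => (2 : ℝ))
      · apply eventually_nhdsWithin_of_eventually_nhds
        filter_upwards [eventually_gt_nhds (by norm_num : (0:ℝ) < 1)] with x hx
        exact Real.hasDerivAt_log hx.ne'
      · apply Eventually.of_forall
        intro x
        simpa using ((hasDerivAt_id x).sub_const 1).const_mul 2
      · exact Eventually.of_forall fun _ => two_ne_zero
      · have h0 : Real.log 1 = 0 := Real.log_one
        rw [← h0]
        exact (Real.continuousAt_log one_ne_zero).continuousWithinAt.tendsto
      · have : ContinuousAt (fun x : ℝ => 2 * (x - 1)) 1 := by fun_prop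
        have h0 : (fun x : ℝ => 2 * (x - 1)) 1 = 0 := by norm_num
        rw [← h0]
        exact this.continuousWithinAt.tendsto
      · have : ContinuousAt (fun x : ℝ => x⁻¹ / 2) 1 :=
          (continuousAt_inv₀ one_ne_zero).div_const 2
        have h0 : (fun x : ℝ => x⁻¹ / 2) 1 = 1 / 2 := by norm_num
        rw [← h0]
        exact this.continuousWithinAt.tendsto
  apply key.congr'
  filter_upwards [self_mem_nhdsWithin] with x hx
  simp only [Set.mem_compl_iff, Set.mem_singleton_iff] at hx
  exact (Bfun_eq_f hx).symm

end BfunAux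

/-- **Lemma 1**: `B` is non-increasing on `(0,∞)`; moreover `B(x) → 1` as `x → 0⁺`, so
`B(x) ≤ 1` for all `x > 0`, and `B(x) → 1/2` as `x → 1`. -/
theorem Bfun_antitone_and_limits :
    AntitoneOn Bfun (Set.Ioi (0 : ℝ)) ∧
      Tendsto Bfun (nhdsWithin 0 (Set.Ioi (0 : ℝ))) (nhds 1) ∧
      (∀ x : ℝ, 0 < x → Bfun x ≤ 1) ∧
      Tendsto Bfun (nhdsWithin 1 {(1 : ℝ)}ᶜ) (nhds (1 / 2)) :=
  ⟨BfunAux.Bfun_anti, BfunAux.Bfun_tendsto_zero,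
    fun _ hx => BfunAux.Bfun_le_one hx, BfunAux.Bfun_tendsto_one⟩
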